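/- Let $F$ be a nonempty closed subset of the unit sphere $\mathbb{S}_n$, let $0 < r < 1$, and set $W_F = \bigcup_{0 < t < 1} \bigcup_{\zeta \in F} E(t\zeta, r)$. Then the intersection of the Euclidean closure of $W_F$ with $\mathbb{S}_n$ is exactly $F$. -/

import Mathlib

noncomputable section
open MeasureTheory Filter Topology Metric

/-- `ℂⁿ` as a Euclidean space. -/
abbrev Cn (n : ℕ) := EuclideanSpace ℂ (Fin n)

/-- The open unit ball `𝔹ₙ`. -/
def Bn (n : ℕ) : Set (Cn n) := Metric.ball 0 1

/-- The unit sphere `𝕊ₙ`. -/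
def Sn (n : ℕ) : Set (Cn n) := Metric.sphere 0 1

/-- The inner product with the paper's convention: `⟨z,w⟩ = Σ zᵢ conj wᵢ`,
linear in the first variable. -/
def pip (n : ℕ) (z w : Cn n) : ℂ := inner ℂ w z

instance CnMeasurableSpace (n : ℕ) : MeasurableSpace (Cn n) := borel _
instance CnBorelSpace (n : ℕ) : BorelSpace (Cn n) := ⟨rfl⟩

open scoped Classical in
/-- The Möbius automorphism `φ_a` of the unit ball interchanging `0` and `a`
(for `a = 0` it is `z ↦ -z`). -/
def mobius (n : ℕ) (a z : Cn n) : Cn n :=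
  if a = 0 then -z else
    (1 - pip n z a)⁻¹ •
      ((a - (pip n z a / pip n a a) • a)
        - ((Real.sqrt (1 - ‖a‖^2) : ℝ) : ℂ) • (z - (pip n z a / pip n a a) • a))

/-- The pseudo-hyperbolic metric `ρ(z,w) = |φ_z(w)|`. -/
def prho (n : ℕ) (z w : Cn n) : ℝ := ‖mobius n z w‖

/-- The pseudo-hyperbolic ball `E(a,r) = {z ∈ 𝔹ₙ : ρ(z,a) < r}`. -/
def pE (n : ℕ) (a : Cn n) (r : ℝ) : Set (Cn n) := {z ∈ Bn n | prho n z a < r}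

/-- The normalized Lebesgue measure on the unit ball (`ν(𝔹ₙ) = 1`). -/
def nu (n : ℕ) : Measure (Cn n) := (volume (Bn n))⁻¹ • volume.restrict (Bn n)

/-- The normalized reproducing kernel `k_z`. -/
def kfun (n : ℕ) (z : Cn n) : Cn n → ℂ :=
  fun w => (((1 - ‖z‖^2) ^ (((n : ℝ) + 1)/2) : ℝ) : ℂ) * ((1 - pip n w z)⁻¹) ^ (n + 1)

/-- The function-level action of the unitary `U_a : f ↦ (f ∘ φ_a)·k_a`. -/
def Ufun (n : ℕ) (a : Cn n) (f : Cn n → ℂ) : Cn n → ℂ :=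
  fun w => f (mobius n a w) * kfun n a w

/-- The function-level Toeplitz operator `T_f` given by its integral formula. -/
def Tfun (n : ℕ) (f h : Cn n → ℂ) : Cn n → ℂ :=
  fun z => ∫ w, f w * h w * ((1 - pip n z w)⁻¹) ^ (n + 1) ∂(nu n)

/-- The `L²` inner product with the paper's convention `⟨f,g⟩ = ∫ f ·conj g dν`. -/
def L2inner (n : ℕ) (f g : Cn n → ℂ) : ℂ :=
  ∫ w, f w * (starRingEnd ℂ) (g w) ∂(nu n)

/-- The Bergman space `L²_a`, as the submodule of `L²(𝔹ₙ, ν)` of elements having a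
holomorphic representative. -/
def bergman (n : ℕ) : Submodule ℂ (Lp ℂ 2 (nu n)) where
  carrier := {f | ∃ g : Cn n → ℂ, DifferentiableOn ℂ g (Bn n) ∧ ⇑f =ᵐ[nu n] g}
  zero_mem' := ⟨0, differentiableOn_const 0, Lp.coeFn_zero ℂ 2 (nu n)⟩
  add_mem' := by
    rintro f₁ f₂ ⟨g₁, hg₁, he₁⟩ ⟨g₂, hg₂, he₂⟩
    exact ⟨g₁ + g₂, hg₁.add hg₂, (Lp.coeFn_add f₁ f₂).trans (he₁.add he₂)⟩
  smul_mem' := by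
    rintro c f ⟨g, hg, he⟩
    exact ⟨c • g, hg.const_smul c, (Lp.coeFn_smul c f).trans (he.const_smul c)⟩

lemma mob_sq (n : ℕ) {b w : Cn n} (hb0 : b ≠ 0) (hb : ‖b‖ < 1) (hw : ‖w‖ < 1) :
    ‖(1 : ℂ) - (inner ℂ b w : ℂ)‖ ^ 2 * (1 - ‖mobius n b w‖ ^ 2)
      = (1 - ‖b‖ ^ 2) * (1 - ‖w‖ ^ 2) := by
  set c : ℂ := (inner ℂ b w : ℂ) with hc
  set Ac : ℂ := ((‖b‖ ^ 2 : ℝ) : ℂ) with hAc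
  have hA0 : (0:ℝ) < ‖b‖ := norm_pos_iff.mpr hb0
  have hAne : (‖b‖:ℝ)^2 ≠ 0 := by positivity
  have hAcne : Ac ≠ 0 := by
    rw [hAc]; exact_mod_cast hAne
  have hpbb : pip n b b = Ac := by
    rw [pip, inner_self_eq_norm_sq_to_K (𝕜 := ℂ), hAc]; norm_cast
  have hibb : (inner ℂ b b : ℂ) = Ac := hpbb
  have hcn : ‖c‖ < 1 := by
    have h1 : ‖c‖ ≤ ‖b‖ * ‖w‖ := norm_inner_le_norm (𝕜 := ℂ) b w
    nlinarith [norm_nonneg w]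
  have h1c : (1:ℂ) - c ≠ 0 := by
    intro h
    have : (1:ℂ) = c := by linear_combination h
    rw [← this] at hcn; simp at hcn
  set s : ℝ := Real.sqrt (1 - ‖b‖^2) with hs
  have hs2 : s^2 = 1 - ‖b‖^2 := Real.sq_sqrt (by nlinarith [norm_nonneg b])
  set P : Cn n := (c / Ac) • b with hP
  set u : Cn n := w - P with hu
  have hmob : mobius n b w = (1 - c)⁻¹ • ((b - P) - (s:ℂ) • u) := by
    rw [mobius, if_neg hb0, hpbb]
    rfl
  have hbP : b - P = ((1:ℂ) - c / Ac) • b := by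
    rw [sub_smul, one_smul]
  have hbPinner : (inner ℂ b P : ℂ) = c := by
    rw [hP, inner_smul_right, hibb, div_mul_cancel₀ _ hAcne]
  have hbu : (inner ℂ b u : ℂ) = 0 := by
    rw [hu, inner_sub_right, hbPinner, ← hc, sub_self]
  have hnormmob : ‖mobius n b w‖^2 = (‖(1:ℂ)-c‖^2)⁻¹ * ‖(b - P) - (s:ℂ) • u‖^2 := by
    rw [hmob, norm_smul, mul_pow, norm_inv, inv_pow]
  have hcross : (inner ℂ (b - P) ((s:ℂ) • u) : ℂ) = 0 := by
    rw [hbP, inner_smul_left, inner_smul_right, hbu]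
    ring
  have hmain : ‖(b - P) - (s:ℂ) • u‖^2 = ‖b - P‖^2 + s^2 * ‖u‖^2 := by
    rw [norm_sub_sq (𝕜 := ℂ), hcross, norm_smul]
    simp [mul_pow, abs_of_nonneg (Real.sqrt_nonneg _), ← hs]
  have hAcnorm : ‖Ac‖ = ‖b‖^2 := by
    rw [hAc, Complex.norm_real, Real.norm_eq_abs, abs_of_nonneg (sq_nonneg _)]
  have hbP2 : ‖b - P‖^2 = ‖Ac - c‖^2 / ‖b‖^2 := by
    have h' : (1:ℂ) - c/Ac = (Ac - c)/Ac := by field_simp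
    rw [hbP, h', norm_smul, norm_div, hAcnorm]
    field_simp
  have hccst : c * (starRingEnd ℂ) c = ((‖c‖^2 : ℝ) : ℂ) := by
    rw [Complex.mul_conj, Complex.sq_norm]
  have hwP : (inner ℂ w P : ℂ) = ((‖c‖^2 / ‖b‖^2 : ℝ) : ℂ) := by
    have h' : (inner ℂ w b : ℂ) = (starRingEnd ℂ) c := by
      rw [← inner_conj_symm w b, ← hc]
    rw [hP, inner_smul_right, h', div_mul_eq_mul_div, hccst, hAc]
    push_cast
    ring
  have hPn : ‖P‖^2 = ‖c‖^2 / ‖b‖^2 := by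
    rw [hP, norm_smul, norm_div, hAcnorm]
    field_simp
  have hu2 : ‖u‖^2 = ‖w‖^2 - ‖c‖^2 / ‖b‖^2 := by
    have hre : (((‖c‖^2 / ‖b‖^2 : ℝ) : ℂ)).re = ‖c‖^2 / ‖b‖^2 := Complex.ofReal_re _
    rw [hu, norm_sub_sq (𝕜 := ℂ), hwP, hPn, RCLike.re_to_complex, hre]
    ring
  have key : ∀ z : ℂ, ‖z‖^2 = z.re^2 + z.im^2 := fun z => by
    rw [Complex.sq_norm, Complex.normSq_apply]; ring
  have e0 : ‖c‖^2 = c.re^2 + c.im^2 := key c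
  have e1 : ‖(1:ℂ) - c‖^2 = 1 - 2*c.re + (c.re^2 + c.im^2) := by
    rw [key]
    simp only [Complex.sub_re, Complex.sub_im, Complex.one_re, Complex.one_im]
    ring
  have e2 : ‖Ac - c‖^2 = (‖b‖^2)^2 - 2*‖b‖^2*c.re + (c.re^2 + c.im^2) := by
    rw [key, hAc]
    simp only [Complex.sub_re, Complex.sub_im, Complex.ofReal_re, Complex.ofReal_im]
    ring
  have hne' : (1:ℝ) - 2*c.re + (c.re^2 + c.im^2) ≠ 0 := by
    have h2 := pow_ne_zero 2 (norm_ne_zero_iff.mpr h1c)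
    rw [e1] at h2; exact h2
  rw [hnormmob, hmain, hbP2, hu2, hs2, e0, e1, e2]
  field_simp
  ring

lemma mobius_self (n : ℕ) {a : Cn n} (ha : a ≠ 0) : mobius n a a = 0 := by
  have hne : pip n a a ≠ 0 := by
    rw [pip, inner_self_eq_norm_sq_to_K (𝕜 := ℂ)]
    simpa using norm_pos_iff.mpr ha |>.ne'
  rw [mobius, if_neg ha, div_self hne, one_smul, sub_self, smul_zero, sub_zero, smul_zero]

lemma sq_le_imp {x y : ℝ} (hx : 0 ≤ x) (hy : 0 ≤ y) (h : x^2 ≤ y^2) : x ≤ y := by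
  nlinarith

lemma arith_main {r t Z X K : ℝ} (hr : 0 < r) (hr1 : r < 1) (ht0 : 0 < t) (ht1 : t < 1)
    (hZ0 : 0 ≤ Z) (hZ1 : Z < 1) (hX0 : 0 ≤ X) (hXt : 1 - t ≤ X)
    (hK : K = 4 / (1 - r^2)) (hmain : (1-r^2) * X^2 ≤ (1-Z^2)*(1-t^2)) :
    1 - t ≤ K * (1 - Z) ∧ X ≤ K * (1 - Z) := by
  have hr2 : (0:ℝ) < 1 - r^2 := by nlinarith
  have h4 : K * (1 - r^2) = 4 := by rw [hK]; field_simp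
  have hKpos : 0 < K := by rw [hK]; positivity
  have h2 : (1-Z^2)*(1-t^2) ≤ 4*(1-Z)*(1-t) := by
    have a1 : 0 ≤ 1 - Z := by linarith
    have a2 : 0 ≤ 1 - t := by linarith
    have a3 : (1+Z)*(1+t) ≤ 4 := by nlinarith
    nlinarith [mul_nonneg (mul_nonneg a1 a2) (by linarith : (0:ℝ) ≤ 4 - (1+Z)*(1+t))]
  have h1 : (1-r^2)*(1-t)^2 ≤ (1-r^2)*X^2 := by nlinarith
  have ht' : 1 - t ≤ K * (1-Z) := by
    have h5 : (1-r^2)*(1-t)^2 ≤ 4*(1-Z)*(1-t) := by linarith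
    have h7 : 0 < 1 - t := by linarith
    have h6 : (1-r^2)*(1-t) ≤ 4*(1-Z) := by nlinarith
    rw [hK, div_mul_eq_mul_div, le_div_iff₀ hr2]
    linarith
  refine ⟨ht', ?_⟩
  have hy0 : 0 ≤ K * (1 - Z) := by
    have : 0 ≤ 1 - Z := by linarith
    positivity
  have h8 : (1-r^2)*X^2 ≤ 4*(1-Z)*(K*(1-Z)) := by nlinarith
  have h9 : X^2 ≤ (K*(1-Z))^2 := by nlinarith
  exact sq_le_imp hX0 hy0 h9

lemma key_est (n : ℕ) {r : ℝ} (hr : 0 < r) (hr1 : r < 1) {t : ℝ} (ht0 : 0 < t) (ht1 : t < 1)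
    {ξ z ζ : Cn n} (hξ : ‖ξ‖ = 1) (hζ : ‖ζ‖ = 1) (hz : z ∈ pE n (t • ξ) r)
    {δ : ℝ} (hδ : 0 < δ) (hδ2 : δ ≤ 1/2) (hdz : ‖ζ - z‖ < δ) :
    ‖ζ - ξ‖^2 ≤ 2*(2*(4/(1-r^2))+1)*δ := by
  have hr2 : (0:ℝ) < 1 - r^2 := by nlinarith
  set K : ℝ := 4/(1-r^2) with hK
  have hKpos : 0 < K := by positivity
  set a : Cn n := t • ξ with ha
  have hanorm : ‖a‖ = t := by
    rw [ha, norm_smul, hξ, Real.norm_eq_abs, abs_of_pos ht0, mul_one]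
  have hzB : ‖z‖ < 1 := by
    have := hz.1
    rwa [Bn, mem_ball_zero_iff] at this
  have hzlow : 1 - δ ≤ ‖z‖ := by
    have h1 : ‖ζ‖ - ‖z‖ ≤ ‖ζ - z‖ := norm_sub_norm_le ζ z
    rw [hζ] at h1; linarith
  have hz0 : z ≠ 0 := by
    intro h; rw [h, norm_zero] at hzlow; linarith
  set c : ℂ := (inner ℂ z a : ℂ) with hc
  have hid := mob_sq n hz0 hzB (show ‖a‖ < 1 by rw [hanorm]; exact ht1)
  rw [← hc, hanorm] at hid
  have hrho : ‖mobius n z a‖ < r := hz.2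
  have hrhon : 0 ≤ ‖mobius n z a‖ := norm_nonneg _
  have hstep1 : (1 - r^2) * ‖(1:ℂ) - c‖^2 ≤ (1 - ‖z‖^2) * (1 - t^2) := by
    rw [← hid]
    have h1 : ‖mobius n z a‖^2 ≤ r^2 := by nlinarith
    nlinarith [sq_nonneg ‖(1:ℂ) - c‖]
  have hclet : ‖c‖ ≤ t := by
    have h1 : ‖c‖ ≤ ‖z‖ * ‖a‖ := norm_inner_le_norm (𝕜 := ℂ) z a
    rw [hanorm] at h1
    have h2 : ‖z‖ * t ≤ 1 * t := mul_le_mul_of_nonneg_right hzB.le ht0.le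
    linarith
  have h1cge : 1 - t ≤ ‖(1:ℂ) - c‖ := by
    have h1 : ‖(1:ℂ)‖ - ‖c‖ ≤ ‖(1:ℂ) - c‖ := norm_sub_norm_le 1 c
    simp only [norm_one] at h1
    linarith
  obtain ⟨htk, h1cle⟩ := arith_main hr hr1 ht0 ht1 (norm_nonneg z) hzB
    (norm_nonneg ((1:ℂ) - c)) h1cge hK hstep1
  have hzd : 1 - ‖z‖ ≤ δ := by linarith
  have hKz : K * (1 - ‖z‖) ≤ K * δ := mul_le_mul_of_nonneg_left hzd hKpos.le
  have h1cd : ‖(1:ℂ) - c‖ ≤ K * δ := le_trans h1cle hKz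
  have htd : 1 - t ≤ K * δ := le_trans htk hKz
  set c' : ℂ := (inner ℂ ζ a : ℂ) with hc'
  have hcc' : ‖c' - c‖ ≤ δ := by
    have h1 : c' - c = (inner ℂ (ζ - z) a : ℂ) := by rw [hc', hc, inner_sub_left]
    rw [h1]
    have h2 : ‖(inner ℂ (ζ - z) a : ℂ)‖ ≤ ‖ζ - z‖ * ‖a‖ := norm_inner_le_norm (𝕜 := ℂ) _ _
    rw [hanorm] at h2
    have h3 : ‖ζ - z‖ * t ≤ δ * t := mul_le_mul_of_nonneg_right hdz.le ht0.le
    have h4 : δ * t ≤ δ * 1 := mul_le_mul_of_nonneg_left ht1.le hδ.le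
    linarith
  set q : ℂ := (inner ℂ ζ ξ : ℂ) with hq
  have hc'q : c' = (t:ℂ) * q := by
    rw [hc', ha, ← algebraMap_smul ℂ t ξ, Complex.coe_algebraMap,
      inner_smul_right, hq]
  have hqn : ‖q‖ ≤ 1 := by
    have h1 : ‖q‖ ≤ ‖ζ‖ * ‖ξ‖ := norm_inner_le_norm (𝕜 := ℂ) ζ ξ
    rw [hζ, hξ, mul_one] at h1
    exact h1
  have h1q : ‖(1:ℂ) - q‖ ≤ (2*K+1) * δ := by
    have h1 : ‖(1:ℂ) - q‖ ≤ ‖(1:ℂ) - c‖ + ‖c' - c‖ + ‖c' - q‖ := by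
      have he : (1:ℂ) - q = ((1:ℂ) - c) - (c' - c) + (c' - q) := by ring
      rw [he]
      calc ‖((1:ℂ) - c) - (c' - c) + (c' - q)‖ ≤ ‖((1:ℂ) - c) - (c' - c)‖ + ‖c' - q‖ :=
            norm_add_le _ _
      _ ≤ ‖(1:ℂ) - c‖ + ‖c' - c‖ + ‖c' - q‖ := by
            have := norm_sub_le ((1:ℂ) - c) (c' - c); linarith
    have h2 : ‖c' - q‖ ≤ 1 - t := by
      rw [hc'q]
      have he : (t:ℂ) * q - q = ((t:ℂ) - 1) * q := by ring
      rw [he, norm_mul]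
      have ht' : ‖(t:ℂ) - 1‖ = 1 - t := by
        rw [← Complex.ofReal_one, ← Complex.ofReal_sub, Complex.norm_real,
          Real.norm_eq_abs, abs_of_neg (by linarith : t - 1 < 0)]
        ring
      rw [ht']
      have := mul_le_mul_of_nonneg_left hqn (by linarith : (0:ℝ) ≤ 1 - t)
      linarith
    linarith
  have hre : 1 - (2*K+1)*δ ≤ q.re := by
    have h1 : ((1:ℂ) - q).re ≤ ‖(1:ℂ) - q‖ := Complex.re_le_norm _
    simp only [Complex.sub_re, Complex.one_re] at h1
    linarith
  have hfin : ‖ζ - ξ‖^2 = 2 - 2 * q.re := by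
    rw [norm_sub_sq (𝕜 := ℂ), hζ, hξ, RCLike.re_to_complex, ← hq]
    ring
  rw [hfin]
  linarith


/-- `cl(W_F) ∩ 𝕊ₙ = F` for the radial union `W_F` of pseudo-hyperbolic
balls over a nonempty closed `F ⊆ 𝕊ₙ`. -/
theorem closure_WF_inter_sphere (n : ℕ) (r : ℝ) (hr : 0 < r) (hr1 : r < 1)
    (F : Set (Cn n)) (hFS : F ⊆ Sn n) (hFc : IsClosed F) (hFne : F.Nonempty) :
    closure (⋃ t ∈ Set.Ioo (0 : ℝ) 1, ⋃ ζ ∈ F, pE n (t • ζ) r) ∩ Sn n = F := by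
  have hr2 : (0:ℝ) < 1 - r^2 := by nlinarith
  set K : ℝ := 4/(1-r^2) with hK
  have hKpos : 0 < K := by positivity
  apply Set.Subset.antisymm
  · rintro ζ ⟨hζW, hζS⟩
    have hζn : ‖ζ‖ = 1 := by rwa [Sn, mem_sphere_zero_iff_norm] at hζS
    rw [← hFc.closure_eq, Metric.mem_closure_iff]
    intro ε hε
    set δ : ℝ := min (1/2) (ε^2 / (2*(2*K+1) + 1)) with hδdef
    have hden : (0:ℝ) < 2*(2*K+1) + 1 := by positivity
    have hδpos : 0 < δ := lt_min (by norm_num) (by positivity)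
    have hδhalf : δ ≤ 1/2 := min_le_left _ _
    obtain ⟨z, hzW, hdz⟩ := Metric.mem_closure_iff.mp hζW δ hδpos
    simp only [Set.mem_iUnion] at hzW
    obtain ⟨t, ht, ξ, hξF, hzE⟩ := hzW
    have hξn : ‖ξ‖ = 1 := by
      have := hFS hξF
      rwa [Sn, mem_sphere_zero_iff_norm] at this
    have hdz' : ‖ζ - z‖ < δ := by rwa [dist_eq_norm] at hdz
    have hest := key_est n hr hr1 ht.1 ht.2 hξn hζn hzE hδpos hδhalf hdz'
    refine ⟨ξ, hξF, ?_⟩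
    rw [dist_eq_norm]
    have h1 : 2*(2*K+1)*δ < ε^2 := by
      have h2 : δ ≤ ε^2 / (2*(2*K+1) + 1) := min_le_right _ _
      have h3 : 2*(2*K+1)*δ ≤ 2*(2*K+1) * (ε^2 / (2*(2*K+1) + 1)) :=
        mul_le_mul_of_nonneg_left h2 (by positivity)
      have h4 : 2*(2*K+1) * (ε^2 / (2*(2*K+1) + 1)) < ε^2 := by
        rw [← mul_div_assoc, div_lt_iff₀ hden]
        nlinarith [pow_pos hε 2]
      linarith
    have h5 : ‖ζ - ξ‖^2 < ε^2 := by
      rw [hK] at *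
      linarith [hest]
    nlinarith [norm_nonneg (ζ - ξ)]
  · intro ζ hζF
    have hζn : ‖ζ‖ = 1 := by
      have := hFS hζF
      rwa [Sn, mem_sphere_zero_iff_norm] at this
    refine ⟨?_, hFS hζF⟩
    rw [Metric.mem_closure_iff]
    intro ε hε
    set t : ℝ := max (1 - ε/2) (1/2) with htdef
    have ht0 : 0 < t := lt_of_lt_of_le (by norm_num) (le_max_right _ _)
    have ht1 : t < 1 := by
      apply max_lt (by linarith) (by norm_num)
    refine ⟨t • ζ, ?_, ?_⟩
    · simp only [Set.mem_iUnion]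
      refine ⟨t, ⟨ht0, ht1⟩, ζ, hζF, ?_, ?_⟩
      · rw [Bn, mem_ball_zero_iff, norm_smul, hζn, Real.norm_eq_abs,
          abs_of_pos ht0, mul_one]
        exact ht1
      · have hne : t • ζ ≠ 0 := by
          intro h
          have := congrArg norm h
          rw [norm_smul, hζn, Real.norm_eq_abs, abs_of_pos ht0, mul_one, norm_zero] at this
          linarith
        rw [prho, mobius_self n hne, norm_zero]
        exact hr
    · rw [dist_eq_norm]
      have he : ζ - t • ζ = (1 - t) • ζ := by
        rw [sub_smul, one_smul]
      rw [he, norm_smul, hζn, Real.norm_eq_abs, abs_of_pos (by linarith), mul_one]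
      have : 1 - ε/2 ≤ t := le_max_left _ _
      linarith
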